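/- Suppose K is (n−1)-dimensional. Let e ∈ ℤ[K] be the image of a homogeneous polynomial of degree n in ℤ[v₁,…,v_m], and suppose e² = Σ_{μ∈M_K} v_μ² in ℤ[K]. Then there exists a function ω : M_K → {±1} such that e = Σ_{μ∈M_K} ω(μ) v_μ. -/

import Mathlib

open MvPolynomial Finset

/-- The Stanley–Reisner ideal `I_K`. -/
noncomputable def SRIdeal (m : ℕ) (K : Finset (Finset (Fin m))) :
    Ideal (MvPolynomial (Fin m) ℤ) :=
  Ideal.span {p | ∃ β : Finset (Fin m), β ∉ K ∧ p = ∏ i ∈ β, X i}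

/-- The set `M_K` of maximal faces of `K`, as a `Finset`. -/
noncomputable def maxFaces (m : ℕ) (K : Finset (Finset (Fin m))) : Finset (Finset (Fin m)) :=
  K.filter (fun μ => ∀ β ∈ K, μ ⊆ β → β = μ)

/-- exponent vector of a squarefree monomial -/
noncomputable def expOf {m : ℕ} (s : Finset (Fin m)) : Fin m →₀ ℕ :=
  ∑ i ∈ s, Finsupp.single i 1

lemma expOf_apply {m : ℕ} (s : Finset (Fin m)) (i : Fin m) :
    expOf s i = if i ∈ s then 1 else 0 := by
  classical
  rw [expOf, Finset.sum_apply']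
  simp only [Finsupp.single_apply]
  rw [Finset.sum_ite_eq' s i (fun _ => 1)]

lemma expOf_support {m : ℕ} (s : Finset (Fin m)) : (expOf s).support = s := by
  ext i
  simp [Finsupp.mem_support_iff, expOf_apply]

lemma expOf_double_support {m : ℕ} (s : Finset (Fin m)) :
    (expOf s + expOf s).support = s := by
  ext i
  simp only [Finsupp.mem_support_iff, Finsupp.add_apply, expOf_apply]
  split <;> simp_all

lemma prod_X_expOf {m : ℕ} (s : Finset (Fin m)) :
    (∏ i ∈ s, X i : MvPolynomial (Fin m) ℤ) = monomial (expOf s) 1 := by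
  rw [← prod_X_pow_eq_monomial, expOf_support]
  refine Finset.prod_congr rfl fun i hi => ?_
  rw [expOf_apply, if_pos hi, pow_one]

lemma mem_support_of_add_eq {m : ℕ} {a b d : Fin m →₀ ℕ} (h : a + b = d) :
    a.support ⊆ d.support := by
  intro i hi
  rw [Finsupp.mem_support_iff] at hi ⊢
  have : a i + b i = d i := by rw [← h]; rfl
  omega

section Ideal

variable {m : ℕ} {K : Finset (Finset (Fin m))}

/-- An element of the SR ideal has no monomials with support a face. -/
lemma coeff_eq_zero_of_mem_SRIdeal (hdown : ∀ α ∈ K, ∀ β ⊆ α, β ∈ K)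
    {Q : MvPolynomial (Fin m) ℤ} (hQ : Q ∈ SRIdeal m K) {d : Fin m →₀ ℕ}
    (hd : d.support ∈ K) : coeff d Q = 0 := by
  classical
  let S : Ideal (MvPolynomial (Fin m) ℤ) :=
    { carrier := {Q | ∀ d : Fin m →₀ ℕ, coeff d Q ≠ 0 → d.support ∉ K}
      zero_mem' := by intro d hd; simp at hd
      add_mem' := by
        intro a b ha hb d hd
        rw [coeff_add] at hd
        rcases (by by_contra h; push_neg at h; rw [h.1, h.2, add_zero] at hd; exact hd rfl :
          coeff d a ≠ 0 ∨ coeff d b ≠ 0) with h | h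
        · exact ha d h
        · exact hb d h
      smul_mem' := by
        intro c Q hQ d hd hK
        apply hd
        rw [smul_eq_mul]
        by_contra hne
        have hdmem : d ∈ (c * Q).support := MvPolynomial.mem_support_iff.2 hne
        have := MvPolynomial.support_mul c Q hdmem
        rw [Finset.mem_add] at this
        obtain ⟨a, ha, b, hb, hab⟩ := this
        have hbd : b.support ⊆ d.support :=
          mem_support_of_add_eq (show b + a = d by rw [add_comm]; exact hab)
        exact hQ b (MvPolynomial.mem_support_iff.1 hb) (hdown _ hK _ hbd) }
  have hle : SRIdeal m K ≤ S := by
    rw [SRIdeal, Ideal.span_le]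
    rintro p ⟨β, hβ, rfl⟩
    intro d hd
    rw [prod_X_expOf] at hd
    rw [coeff_monomial] at hd
    split at hd
    · next h => rw [← h, expOf_support]; exact hβ
    · exact absurd rfl hd
  by_contra h
  exact hle hQ d h hd

/-- Converse: a polynomial with no face-supported monomials is in the SR ideal. -/
lemma mem_SRIdeal_of_coeff (Q : MvPolynomial (Fin m) ℤ)
    (h : ∀ d ∈ Q.support, (d.support : Finset (Fin m)) ∉ K) : Q ∈ SRIdeal m K := by
  classical
  rw [Q.as_sum]
  refine Ideal.sum_mem _ fun d hd => ?_
  have hgen : (∏ i ∈ d.support, X i : MvPolynomial (Fin m) ℤ) ∈ SRIdeal m K :=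
    Ideal.subset_span ⟨d.support, h d hd, rfl⟩
  have hdd : (d - expOf d.support) + expOf d.support = d := by
    ext i
    rw [Finsupp.add_apply, Finsupp.tsub_apply, expOf_apply]
    by_cases hi : i ∈ d.support
    · rw [if_pos hi]
      have : d i ≠ 0 := Finsupp.mem_support_iff.1 hi
      omega
    · rw [if_neg hi]
      omega
  have key : (monomial d (coeff d Q) : MvPolynomial (Fin m) ℤ) =
      monomial (d - expOf d.support) (coeff d Q) * ∏ i ∈ d.support, X i := by
    rw [prod_X_expOf, monomial_mul, mul_one, hdd]
  rw [key]
  exact Ideal.mul_mem_left _ _ hgen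

end Ideal

/-- Suppose `K` is `(n-1)`-dimensional.  If `e ∈ ℤ[K]` is the image of a homogeneous
polynomial of degree `n` and `e² = Σ_{μ ∈ M_K} v_μ²`, then `e = Σ_{μ ∈ M_K} ω(μ) v_μ`
for some function `ω : M_K → {±1}`. -/
theorem stmt5 (m n : ℕ) (K : Finset (Finset (Fin m)))
    (hempty : ∅ ∈ K) (hdown : ∀ α ∈ K, ∀ β ⊆ α, β ∈ K)
    (hdim : ∀ α ∈ K, α.card ≤ n) (hdim' : ∃ α ∈ K, α.card = n)
    (P : MvPolynomial (Fin m) ℤ) (hP : P.IsHomogeneous n)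
    (hsq : (Ideal.Quotient.mk (SRIdeal m K) P) ^ 2 =
      ∑ μ ∈ maxFaces m K, Ideal.Quotient.mk (SRIdeal m K) (∏ i ∈ μ, X i) ^ 2) :
    ∃ ω : Finset (Fin m) → ℤ, (∀ μ ∈ maxFaces m K, ω μ = 1 ∨ ω μ = -1) ∧
      Ideal.Quotient.mk (SRIdeal m K) P =
        ∑ μ ∈ maxFaces m K, ω μ • Ideal.Quotient.mk (SRIdeal m K) (∏ i ∈ μ, X i) := by
  classical
  set I := SRIdeal m K with hI
  -- maximal faces facts
  have hmaxK : ∀ μ ∈ maxFaces m K, μ ∈ K ∧ ∀ β ∈ K, μ ⊆ β → β = μ := by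
    intro μ hμ; exact Finset.mem_filter.1 hμ
  have hkill : ∀ μ, μ ∈ K → ∀ ν ∈ maxFaces m K, ν ⊆ μ → ν = μ := by
    intro μ hμ ν hν hsub
    exact ((hmaxK ν hν).2 μ hμ hsub).symm
  -- every face lies in a maximal face
  have hmax : ∀ α ∈ K, ∃ μ ∈ maxFaces m K, α ⊆ μ := by
    intro α hα
    obtain ⟨μ, hμmem, hμmax⟩ := Finset.exists_max_image (K.filter (α ⊆ ·)) Finset.card
      ⟨α, Finset.mem_filter.2 ⟨hα, Finset.Subset.refl α⟩⟩
    rw [Finset.mem_filter] at hμmem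
    refine ⟨μ, Finset.mem_filter.2 ⟨hμmem.1, fun β hβ hb => ?_⟩, hμmem.2⟩
    exact (Finset.eq_of_subset_of_card_le hb
      (hμmax β (Finset.mem_filter.2 ⟨hβ, hμmem.2.trans hb⟩))).symm
  -- step 1: polynomial-level congruence
  have hsq' : (P ^ 2 - ∑ μ ∈ maxFaces m K, (∏ i ∈ μ, X i) ^ 2) ∈ I := by
    rw [← Ideal.Quotient.eq]
    rw [map_pow, hsq, map_sum]
    exact Finset.sum_congr rfl fun μ _ => by rw [map_pow]
  have key : ∀ d : Fin m →₀ ℕ, d.support ∈ K →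
      coeff d (P ^ 2) = coeff d (∑ μ ∈ maxFaces m K, (∏ i ∈ μ, X i) ^ 2) := by
    intro d hd
    have h0 := coeff_eq_zero_of_mem_SRIdeal hdown hsq' hd
    rw [coeff_sub, sub_eq_zero] at h0
    exact h0
  -- restriction of P to a face
  set Pr : Finset (Fin m) → MvPolynomial (Fin m) ℤ := fun μ =>
    ∑ d ∈ P.support.filter (fun d => d.support ⊆ μ), monomial d (coeff d P) with hPr
  have coeff_Pr : ∀ μ d, coeff d (Pr μ) = if d.support ⊆ μ then coeff d P else 0 := by
    intro μ d
    rw [hPr]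
    rw [MvPolynomial.coeff_sum]
    simp only [coeff_monomial]
    rw [Finset.sum_ite_eq' (P.support.filter (fun d => d.support ⊆ μ)) d (fun e => coeff e P)]
    have hmem : (d ∈ P.support.filter (fun e => e.support ⊆ μ)) ↔
        (d ∈ P.support ∧ d.support ⊆ μ) := Finset.mem_filter
    by_cases h1 : d.support ⊆ μ
    · by_cases h2 : d ∈ P.support
      · rw [if_pos (hmem.2 ⟨h2, h1⟩), if_pos h1]
      · rw [if_neg (fun h => h2 (hmem.1 h).1), if_pos h1,
          MvPolynomial.notMem_support_iff.1 h2]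
    · rw [if_neg (fun h => h1 (hmem.1 h).2), if_neg h1]
  -- squares agree on coefficients inside μ
  have hPr_sq : ∀ μ (d : Fin m →₀ ℕ), d.support ⊆ μ →
      coeff d ((Pr μ) ^ 2) = coeff d (P ^ 2) := by
    intro μ d hd
    rw [pow_two, pow_two, coeff_mul, coeff_mul]
    refine Finset.sum_congr rfl fun x hx => ?_
    rw [Finset.HasAntidiagonal.mem_antidiagonal] at hx
    have h1 : x.1.support ⊆ μ := (mem_support_of_add_eq hx).trans hd
    have h2 : x.2.support ⊆ μ := (mem_support_of_add_eq (by rw [add_comm]; exact hx)).trans hd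
    rw [coeff_Pr μ x.1, coeff_Pr μ x.2, if_pos h1, if_pos h2]
  have hPr_sq_out : ∀ μ (d : Fin m →₀ ℕ), ¬ d.support ⊆ μ →
      coeff d ((Pr μ) ^ 2) = 0 := by
    intro μ d hd
    rw [pow_two, coeff_mul]
    refine Finset.sum_eq_zero fun x hx => ?_
    rw [Finset.HasAntidiagonal.mem_antidiagonal] at hx
    by_cases h1 : x.1.support ⊆ μ
    · by_cases h2 : x.2.support ⊆ μ
      · exfalso
        apply hd
        intro i hi
        rw [Finsupp.mem_support_iff] at hi
        have : x.1 i + x.2 i = d i := by rw [← hx]; rfl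
        have : x.1 i ≠ 0 ∨ x.2 i ≠ 0 := by omega
        rcases this with h | h
        · exact h1 (Finsupp.mem_support_iff.2 h)
        · exact h2 (Finsupp.mem_support_iff.2 h)
      · rw [coeff_Pr μ x.2, if_neg h2, mul_zero]
    · rw [coeff_Pr μ x.1, if_neg h1, zero_mul]
  -- the square of the restriction
  have hPrsqEq : ∀ μ ∈ maxFaces m K, (Pr μ) ^ 2 = (∏ i ∈ μ, X i) ^ 2 := by
    intro μ hμ
    have hμK : μ ∈ K := (hmaxK μ hμ).1
    have hvsq : ((∏ i ∈ μ, X i : MvPolynomial (Fin m) ℤ)) ^ 2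
        = monomial (expOf μ + expOf μ) 1 := by
      rw [prod_X_expOf, pow_two, monomial_mul, mul_one]
    apply MvPolynomial.ext
    intro d
    by_cases hsub : d.support ⊆ μ
    · rw [hPr_sq μ d hsub, key d (hdown μ hμK d.support hsub), hvsq, coeff_monomial]
      rw [MvPolynomial.coeff_sum]
      have : ∀ ν ∈ maxFaces m K,
          coeff d ((∏ i ∈ ν, X i : MvPolynomial (Fin m) ℤ) ^ 2)
            = if expOf ν + expOf ν = d then 1 else 0 := by
        intro ν _
        rw [prod_X_expOf, pow_two, monomial_mul, mul_one, coeff_monomial]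
      rw [Finset.sum_congr rfl this]
      rw [Finset.sum_eq_single_of_mem μ hμ]
      intro ν hν hne
      rw [if_neg]
      intro hcontra
      have hνd : ν = d.support := by rw [← hcontra, expOf_double_support]
      exact hne (hkill μ hμK ν hν (by rw [hνd]; exact hsub))
    · rw [hPr_sq_out μ d hsub, hvsq, coeff_monomial, if_neg]
      intro hcontra
      apply hsub
      rw [← hcontra, expOf_double_support]
  -- dichotomy
  have hdicho : ∀ μ ∈ maxFaces m K, Pr μ = (∏ i ∈ μ, X i) ∨ Pr μ = -(∏ i ∈ μ, X i) :=
    fun μ hμ => ((Commute.all _ _).sq_eq_sq_iff_eq_or_eq_neg).1 (hPrsqEq μ hμ)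
  set ω : Finset (Fin m) → ℤ := fun μ => if Pr μ = (∏ i ∈ μ, X i) then 1 else -1 with hω
  have hωval : ∀ μ ∈ maxFaces m K, Pr μ = ω μ • (∏ i ∈ μ, X i) := by
    intro μ hμ
    simp only [hω]
    rcases hdicho μ hμ with h | h
    · rw [if_pos h, one_smul]; exact h
    · by_cases h2 : Pr μ = (∏ i ∈ μ, X i)
      · rw [if_pos h2, one_smul]; exact h2
      · rw [if_neg h2, neg_smul, one_smul]; exact h
  refine ⟨ω, fun μ _ => by simp only [hω]; split <;> simp, ?_⟩
  have hstep : (∑ μ ∈ maxFaces m K, ω μ • Ideal.Quotient.mk I (∏ i ∈ μ, X i))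
      = Ideal.Quotient.mk I (∑ μ ∈ maxFaces m K, ω μ • (∏ i ∈ μ, X i)) := by
    rw [map_sum]
    exact Finset.sum_congr rfl fun μ _ => (map_zsmul (Ideal.Quotient.mk I) _ _).symm
  rw [hstep, Ideal.Quotient.eq]
  apply mem_SRIdeal_of_coeff
  intro d hd
  rw [MvPolynomial.mem_support_iff] at hd
  by_contra hdK
  apply hd
  rw [coeff_sub, sub_eq_zero]
  obtain ⟨μ, hμ, hsub⟩ := hmax d.support hdK
  have hμK : μ ∈ K := (hmaxK μ hμ).1
  have hL : coeff d P = ω μ * (if expOf μ = d then 1 else 0) := by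
    have := coeff_Pr μ d
    rw [if_pos hsub] at this
    rw [← this, hωval μ hμ, MvPolynomial.coeff_smul, prod_X_expOf, coeff_monomial]
    rfl
  rw [hL, MvPolynomial.coeff_sum]
  have : ∀ ν ∈ maxFaces m K,
      coeff d (ω ν • (∏ i ∈ ν, X i : MvPolynomial (Fin m) ℤ))
        = ω ν * (if expOf ν = d then 1 else 0) := by
    intro ν _
    rw [MvPolynomial.coeff_smul, prod_X_expOf, coeff_monomial]
    rfl
  rw [Finset.sum_congr rfl this]
  rw [Finset.sum_eq_single_of_mem μ hμ]
  intro ν hν hne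
  rw [if_neg, mul_zero]
  intro hcontra
  have hνd : ν = d.support := by rw [← hcontra, expOf_support]
  exact hne (hkill μ hμK ν hν (by rw [hνd]; exact hsub))
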